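/- Let Ω₁,…,Ω_k with Ω_i ⊆ ℂ^{n_i} be bounded domains and let Ω = Ω₁ × Ω₂ × ⋯ × Ω_k ⊆ ℂⁿ, where n = n₁ + n₂ + ⋯ + n_k. Then for any a = (a₁, a₂, …, a_k) ∈ Ω with a_i ∈ Ω_i, one has T_Ω(a) ≥ min_{1 ≤ i ≤ k} T_{Ω_i}(a_i). -/

import Mathlib

open Metric Set Matrix
open scoped ComplexOrder

noncomputable section

/-- The open polydisk of radius `r` centered at the origin in `ℂ^ι`:
`𝔻^ι(0,r) = { w : |wᵢ| < r for all i }`. -/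
def polydisk (ι : Type*) [Fintype ι] (r : ℝ) : Set (EuclideanSpace ℂ ι) :=
  {w | ∀ i, ‖w i‖ < r}

/-- The squeezing function corresponding to the polydisk:
`T_Ω(z) = sup { r > 0 : ∃ injective holomorphic f : Ω → 𝔻ⁿ, f z = 0, 𝔻ⁿ(0,r) ⊆ f(Ω) }`. -/
def squeezingT {ι : Type*} [Fintype ι] (Ω : Set (EuclideanSpace ℂ ι))
    (z : EuclideanSpace ℂ ι) : ℝ :=
  sSup {r : ℝ | 0 < r ∧ ∃ f : EuclideanSpace ℂ ι → EuclideanSpace ℂ ι,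
    DifferentiableOn ℂ f Ω ∧ Set.InjOn f Ω ∧ f '' Ω ⊆ polydisk ι 1 ∧
    f z = 0 ∧ polydisk ι r ⊆ f '' Ω}

/-- The squeezing function corresponding to the Euclidean unit ball:
`S_Ω(z) = sup { r > 0 : ∃ injective holomorphic f : Ω → Bⁿ, f z = 0, Bⁿ(0,r) ⊆ f(Ω) }`. -/
def squeezingS {ι : Type*} [Fintype ι] (Ω : Set (EuclideanSpace ℂ ι))
    (z : EuclideanSpace ℂ ι) : ℝ :=
  sSup {r : ℝ | 0 < r ∧ ∃ f : EuclideanSpace ℂ ι → EuclideanSpace ℂ ι,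
    DifferentiableOn ℂ f Ω ∧ Set.InjOn f Ω ∧ f '' Ω ⊆ ball (0 : EuclideanSpace ℂ ι) 1 ∧
    f z = 0 ∧ ball (0 : EuclideanSpace ℂ ι) r ⊆ f '' Ω}

/-- A bounded domain in `ℂ^ι`: a nonempty connected bounded open set. -/
def IsBoundedDomain {ι : Type*} [Fintype ι] (Ω : Set (EuclideanSpace ℂ ι)) : Prop :=
  IsOpen Ω ∧ IsConnected Ω ∧ Bornology.IsBounded Ω

/-- The `i`-th block of a vector in `ℂ^{n₁} × ⋯ × ℂ^{n_k}` viewed inside `ℂ^{n₁+⋯+n_k}`. -/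
def blockOf {k : ℕ} {n : Fin k → ℕ} (z : EuclideanSpace ℂ ((i : Fin k) × Fin (n i)))
    (i : Fin k) : EuclideanSpace ℂ (Fin (n i)) := WithLp.toLp 2 (fun j => z ⟨i, j⟩)

/-- The product `Ω₁ × ⋯ × Ω_k` viewed as a subset of `ℂ^{n₁+⋯+n_k}`. -/
def prodDomain {k : ℕ} {n : Fin k → ℕ} (Ω : ∀ i, Set (EuclideanSpace ℂ (Fin (n i)))) :
    Set (EuclideanSpace ℂ ((i : Fin k) × Fin (n i))) :=
  {z | ∀ i, blockOf z i ∈ Ω i}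

/-- aux set -/
def TSet {ι : Type*} [Fintype ι] (Ω : Set (EuclideanSpace ℂ ι))
    (z : EuclideanSpace ℂ ι) : Set ℝ :=
  {r : ℝ | 0 < r ∧ ∃ f : EuclideanSpace ℂ ι → EuclideanSpace ℂ ι,
    DifferentiableOn ℂ f Ω ∧ Set.InjOn f Ω ∧ f '' Ω ⊆ polydisk ι 1 ∧
    f z = 0 ∧ polydisk ι r ⊆ f '' Ω}

lemma squeezingT_eq_sSup {ι : Type*} [Fintype ι] (Ω : Set (EuclideanSpace ℂ ι))
    (z : EuclideanSpace ℂ ι) : squeezingT Ω z = sSup (TSet Ω z) := rfl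

lemma squeezingT_nonneg {ι : Type*} [Fintype ι] (Ω : Set (EuclideanSpace ℂ ι))
    (z : EuclideanSpace ℂ ι) : 0 ≤ squeezingT Ω z :=
  Real.sSup_nonneg fun _ hx => hx.1.le

lemma squeezingT_eq_zero_of_isEmpty {ι : Type*} [Fintype ι] [IsEmpty ι]
    (Ω : Set (EuclideanSpace ℂ ι)) (hΩ : Ω.Nonempty) (z : EuclideanSpace ℂ ι) :
    squeezingT Ω z = 0 := by
  have hsub : Ioi (0 : ℝ) ⊆ TSet Ω z := by
    intro r hr
    refine ⟨hr, id, differentiableOn_id, fun x _ y _ _ => Subsingleton.elim x y,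
      ?_, Subsingleton.elim _ _, ?_⟩
    · rintro w _ i; exact isEmptyElim i
    · rintro w -; obtain ⟨x, hx⟩ := hΩ
      exact ⟨x, hx, Subsingleton.elim _ _⟩
  rw [squeezingT_eq_sSup, Real.sSup_of_not_bddAbove]
  intro hb
  exact not_bddAbove_Ioi (a := (0:ℝ)) (hb.mono hsub)

lemma exists_mem_TSet_gt {ι : Type*} [Fintype ι] (Ω : Set (EuclideanSpace ℂ ι))
    (z : EuclideanSpace ℂ ι) {r : ℝ} (hr0 : 0 ≤ r) (hr : r < squeezingT Ω z) :
    ∃ s ∈ TSet Ω z, r < s := by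
  rcases (TSet Ω z).eq_empty_or_nonempty with he | hne
  · rw [squeezingT_eq_sSup, he, Real.sSup_empty] at hr
    exact absurd hr (not_lt.2 hr0)
  · exact exists_lt_of_lt_csSup hne hr

lemma TSet_le_one {ι : Type*} [Fintype ι] [Nonempty ι] (Ω : Set (EuclideanSpace ℂ ι))
    (z : EuclideanSpace ℂ ι) {s : ℝ} (hs : s ∈ TSet Ω z) : s ≤ 1 := by
  obtain ⟨hs0, f, -, -, him, -, hsub⟩ := hs
  by_contra h
  push_neg at h
  have hw : (WithLp.toLp 2 (fun _ => 1) : EuclideanSpace ℂ ι) ∈ polydisk ι s := by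
    intro i; simpa using h
  have := him (hsub hw) (Classical.arbitrary ι)
  simp at this

/-- block projection as a continuous linear map -/
def blockCLM {k : ℕ} {n : Fin k → ℕ} (i : Fin k) :
    EuclideanSpace ℂ ((i : Fin k) × Fin (n i)) →L[ℂ] EuclideanSpace ℂ (Fin (n i)) :=
  ((PiLp.continuousLinearEquiv 2 ℂ fun _ : Fin (n i) => ℂ).symm.toContinuousLinearMap).comp
    ((ContinuousLinearMap.pi fun j : Fin (n i) =>
        ContinuousLinearMap.proj (R := ℂ) (φ := fun _ : (i : Fin k) × Fin (n i) => ℂ)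
          ⟨i, j⟩).comp
      (PiLp.continuousLinearEquiv 2 ℂ fun _ : (i : Fin k) × Fin (n i) => ℂ).toContinuousLinearMap)

lemma blockCLM_apply {k : ℕ} {n : Fin k → ℕ} (i : Fin k)
    (z : EuclideanSpace ℂ ((i : Fin k) × Fin (n i))) : blockCLM i z = blockOf z i := by
  ext j; rfl



/-- Lower bound for the polydisk-squeezing function of a product domain:
`T_Ω(a) ≥ min_{1 ≤ i ≤ k} T_{Ωᵢ}(aᵢ)`. -/
theorem squeezingT_product_lower_bound (k : ℕ) (hk : 0 < k) (n : Fin k → ℕ)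
    (Ω : ∀ i, Set (EuclideanSpace ℂ (Fin (n i)))) (hΩ : ∀ i, IsBoundedDomain (Ω i))
    (a : EuclideanSpace ℂ ((i : Fin k) × Fin (n i))) (ha : a ∈ prodDomain Ω) :
    squeezingT (prodDomain Ω) a ≥
      Finset.univ.inf' (Finset.univ_nonempty_iff.mpr ⟨⟨0, hk⟩⟩)
        (fun i : Fin k => squeezingT (Ω i) (blockOf a i)) := by
  set m := Finset.univ.inf' (Finset.univ_nonempty_iff.mpr ⟨⟨0, hk⟩⟩)
      (fun i : Fin k => squeezingT (Ω i) (blockOf a i)) with hm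
  rcases le_or_gt m 0 with hm0 | hm0
  · exact le_trans hm0 (squeezingT_nonneg _ _)
  have hTi : ∀ i, m ≤ squeezingT (Ω i) (blockOf a i) := fun i =>
    Finset.inf'_le _ (Finset.mem_univ i)
  have hnpos : ∀ i, 0 < n i := by
    intro i
    by_contra hni
    have hni0 : n i = 0 := Nat.eq_zero_of_not_pos hni
    haveI : IsEmpty (Fin (n i)) := by rw [hni0]; infer_instance
    have h0 := squeezingT_eq_zero_of_isEmpty (Ω i) (hΩ i).2.1.nonempty (blockOf a i)
    have := lt_of_lt_of_le hm0 (hTi i)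
    rw [h0] at this
    exact lt_irrefl 0 this
  haveI : Nonempty ((i : Fin k) × Fin (n i)) := ⟨⟨⟨0, hk⟩, ⟨0, hnpos _⟩⟩⟩
  have key : ∀ r : ℝ, 0 < r → r < m → r ∈ TSet (prodDomain Ω) a := by
    intro r hr0 hrm
    have hex : ∀ i, ∃ s ∈ TSet (Ω i) (blockOf a i), r < s := fun i =>
      exists_mem_TSet_gt _ _ hr0.le (lt_of_lt_of_le hrm (hTi i))
    choose s hs hrs using hex
    choose f hdiff hinj him hfa hsub using fun i => (hs i).2
    refine ⟨hr0, fun z => WithLp.toLp 2 (fun p : (i : Fin k) × Fin (n i) => f p.1 (blockOf z p.1) p.2), ?_, ?_, ?_, ?_, ?_⟩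
    · have hcomp : ∀ (p : (i : Fin k) × Fin (n i)),
          DifferentiableOn ℂ (fun z => f p.1 (blockOf z p.1) p.2) (prodDomain Ω) := by
        intro p
        have h1 : DifferentiableOn ℂ (fun w => f p.1 w p.2) (Ω p.1) := by
          have := (EuclideanSpace.proj (𝕜 := ℂ) p.2).differentiable.comp_differentiableOn
            (hdiff p.1)
          exact this
        have h2 : DifferentiableOn ℂ (fun z => blockOf z p.1) (prodDomain Ω) := by
          have := ((blockCLM (k := k) (n := n) p.1).differentiable).differentiableOn
            (s := prodDomain Ω)
          exact this.congr (fun z _ => (blockCLM_apply p.1 z).symm)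
        have := h1.comp h2 (fun z hz => hz p.1)
        exact this
      have hpi : DifferentiableOn ℂ (fun z (p : (i : Fin k) × Fin (n i)) =>
          f p.1 (blockOf z p.1) p.2) (prodDomain Ω) := differentiableOn_pi.2 hcomp
      exact (PiLp.continuousLinearEquiv 2 ℂ
        (fun _ : (i : Fin k) × Fin (n i) => ℂ)).symm.toContinuousLinearMap.differentiable.comp_differentiableOn hpi
    · intro x hx y hy hxy
      have hb : ∀ i, blockOf x i = blockOf y i := by
        intro i
        apply hinj i (hx i) (hy i)
        ext j
        exact congrFun (congrArg WithLp.ofLp hxy) ⟨i, j⟩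
      ext p
      exact congrFun (congrArg WithLp.ofLp (hb p.1)) p.2
    · rintro w ⟨z, hz, rfl⟩ p
      exact him p.1 ⟨blockOf z p.1, hz p.1, rfl⟩ p.2
    · ext p
      exact congrFun (congrArg WithLp.ofLp (hfa p.1)) p.2
    · intro w hw
      have hwi : ∀ i, blockOf w i ∈ f i '' Ω i := by
        intro i
        apply hsub i
        intro j
        exact lt_trans (hw ⟨i, j⟩) (hrs i)
      choose zi hzi hfzi using hwi
      have hblock : ∀ i, blockOf (WithLp.toLp 2 (fun p : (i : Fin k) × Fin (n i) => zi p.1 p.2) :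
          EuclideanSpace ℂ ((i : Fin k) × Fin (n i))) i = zi i := fun i => rfl
      refine ⟨WithLp.toLp 2 (fun p : (i : Fin k) × Fin (n i) => zi p.1 p.2), ?_, ?_⟩
      · intro i
        exact hzi i
      · ext p
        exact congrFun (congrArg WithLp.ofLp (hfzi p.1)) p.2
  by_contra hlt
  push_neg at hlt
  have hT0 : 0 ≤ squeezingT (prodDomain Ω) a := squeezingT_nonneg _ _
  set T := squeezingT (prodDomain Ω) a with hT
  have hr0 : 0 < (T + m) / 2 := by linarith
  have hrm : (T + m) / 2 < m := by linarith
  have hmem := key _ hr0 hrm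
  have hbdd : BddAbove (TSet (prodDomain Ω) a) := ⟨1, fun s hs => TSet_le_one _ _ hs⟩
  have hle : (T + m) / 2 ≤ T := le_csSup hbdd hmem
  linarith
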